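/- Suppose g : ℝ^p × ℝ^q → ℝ is such that for every x, the map y ↦ g(x,y) is μ_y-strongly convex and differentiable, and ∇_y g is L̃_{xy}-Lipschitz in x, i.e., ‖∇_y g(x₁,y) − ∇_y g(x₂,y)‖ ≤ L̃_{xy}‖x₁ − x₂‖ for all y. Let y*(x) denote the unique minimizer of g(x,·). Then y* is (L̃_{xy}/μ_y)-Lipschitz: ‖y*(x₁) − y*(x₂)‖ ≤ (L̃_{xy}/μ_y)‖x₁ − x₂‖ for all x₁, x₂. -/

import Mathlib

/-- Lipschitz continuity of the inner-level minimizer `y*(x)` when `g(x,·)` is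
`μ_y`-strongly convex and `∇_y g` is `L̃_{xy}`-Lipschitz in `x`. -/
theorem inner_minimizer_lipschitz {p q : ℕ} (μy Lxy : ℝ) (hμy : 0 < μy) (hLxy : 0 ≤ Lxy)
    (g : EuclideanSpace ℝ (Fin p) → EuclideanSpace ℝ (Fin q) → ℝ)
    (Gy : EuclideanSpace ℝ (Fin p) → EuclideanSpace ℝ (Fin q) → EuclideanSpace ℝ (Fin q))
    (hgrad : ∀ x y, HasGradientAt (g x) (Gy x y) y)
    (hsc : ∀ x y y', g x y' ≥ g x y + (inner ℝ (Gy x y) (y' - y) : ℝ) + μy / 2 * ‖y' - y‖ ^ 2)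
    (hlip : ∀ x₁ x₂ y, ‖Gy x₁ y - Gy x₂ y‖ ≤ Lxy * ‖x₁ - x₂‖)
    (ystar : EuclideanSpace ℝ (Fin p) → EuclideanSpace ℝ (Fin q))
    (hmin : ∀ x y, g x (ystar x) ≤ g x y) :
    ∀ x₁ x₂, ‖ystar x₁ - ystar x₂‖ ≤ (Lxy / μy) * ‖x₁ - x₂‖ := by
  -- First: the gradient vanishes at the minimizer.
  have hzero : ∀ x, Gy x (ystar x) = 0 := by
    intro x
    have hloc : IsLocalMin (g x) (ystar x) :=
      Filter.Eventually.of_forall (fun y => hmin x y)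
    have h0 : InnerProductSpace.toDual ℝ (EuclideanSpace ℝ (Fin q)) (Gy x (ystar x)) = 0 :=
      hloc.hasFDerivAt_eq_zero (hgrad x (ystar x))
    have := congrArg (InnerProductSpace.toDual ℝ (EuclideanSpace ℝ (Fin q))).symm h0
    simpa using this
  intro x₁ x₂
  set y₁ := ystar x₁
  set y₂ := ystar x₂
  set d := y₁ - y₂ with hd
  by_cases hdz : ‖d‖ = 0
  · rw [hdz]
    positivity
  have hdpos : 0 < ‖d‖ := lt_of_le_of_ne (norm_nonneg d) (Ne.symm hdz)
  -- strong monotonicity of Gy x₁ between y₁ and y₂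
  have h1 := hsc x₁ y₁ y₂
  have h2 := hsc x₁ y₂ y₁
  have hnorm : ‖y₂ - y₁‖ = ‖d‖ := by rw [hd, norm_sub_rev]
  have hkey : μy * ‖d‖ ^ 2 ≤ (inner ℝ (Gy x₁ y₂) (y₂ - y₁) : ℝ) := by
    have hz := hzero x₁
    rw [hz] at h1
    simp only [inner_zero_left] at h1
    rw [hnorm] at h1
    rw [← hd] at h2
    have hi : (inner ℝ (Gy x₁ y₂) (y₂ - y₁) : ℝ) = -(inner ℝ (Gy x₁ y₂) d : ℝ) := by
      rw [hd, ← inner_neg_right, neg_sub]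
    rw [hi]
    nlinarith [h1, h2]
  have hCS : (inner ℝ (Gy x₁ y₂) (y₂ - y₁) : ℝ) ≤ ‖Gy x₁ y₂‖ * ‖d‖ := by
    calc (inner ℝ (Gy x₁ y₂) (y₂ - y₁) : ℝ) ≤ ‖Gy x₁ y₂‖ * ‖y₂ - y₁‖ :=
          real_inner_le_norm _ _
      _ = ‖Gy x₁ y₂‖ * ‖d‖ := by rw [hnorm]
  have hGbound : ‖Gy x₁ y₂‖ ≤ Lxy * ‖x₁ - x₂‖ := by
    have := hlip x₁ x₂ y₂
    rw [hzero x₂, sub_zero] at this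
    exact this
  have : μy * ‖d‖ ^ 2 ≤ Lxy * ‖x₁ - x₂‖ * ‖d‖ := by
    calc μy * ‖d‖ ^ 2 ≤ ‖Gy x₁ y₂‖ * ‖d‖ := hkey.trans hCS
      _ ≤ Lxy * ‖x₁ - x₂‖ * ‖d‖ := by
          exact mul_le_mul_of_nonneg_right hGbound (norm_nonneg d)
  rw [div_mul_eq_mul_div, le_div_iff₀ hμy]
  nlinarith [this, hdpos]
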